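/- The Baxter equivalence relation is compatible with the Schützenberger involution: for words u, v in A*, if u ≡_B v then u^# ≡_B v^#. -/
import Mathlib


open scoped Classical

/-- Baxter adjacency relations on words over the alphabet of natural numbers. -/
def BaxterAdj (w w' : List ℕ) : Prop :=
  (∃ (a b c d : ℕ) (u v : List ℕ), a ≤ b ∧ b < c ∧ c ≤ d ∧
      w = c :: (u ++ a :: d :: (v ++ [b])) ∧ w' = c :: (u ++ d :: a :: (v ++ [b]))) ∨
  (∃ (a b c d : ℕ) (u v : List ℕ), a < b ∧ b ≤ c ∧ c < d ∧
      w = b :: (u ++ d :: a :: (v ++ [c])) ∧ w' = b :: (u ++ a :: d :: (v ++ [c])))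

/-- One rewriting step: an adjacency applied inside a word (congruence context). -/
def BaxterStep (w w' : List ℕ) : Prop :=
  ∃ (p s u v : List ℕ), BaxterAdj u v ∧ w = p ++ u ++ s ∧ w' = p ++ v ++ s

/-- The Baxter congruence: the equivalence generated by the Baxter steps. -/
def BaxterEquiv : List ℕ → List ℕ → Prop := Relation.EqvGen BaxterStep

/-- Sylvester adjacency: a c u b ≡ c a u b when a ≤ b < c. -/
def SylvAdj (w w' : List ℕ) : Prop :=
  ∃ (a b c : ℕ) (u : List ℕ), a ≤ b ∧ b < c ∧
    w = a :: c :: (u ++ [b]) ∧ w' = c :: a :: (u ++ [b])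

def SylvStep (w w' : List ℕ) : Prop :=
  ∃ (p s u v : List ℕ), SylvAdj u v ∧ w = p ++ u ++ s ∧ w' = p ++ v ++ s

def SylvEquiv : List ℕ → List ℕ → Prop := Relation.EqvGen SylvStep

/-- #-sylvester adjacency: b u a c ≡ b u c a when a < b ≤ c. -/
def SylvHAdj (w w' : List ℕ) : Prop :=
  ∃ (a b c : ℕ) (u : List ℕ), a < b ∧ b ≤ c ∧
    w = b :: (u ++ [a, c]) ∧ w' = b :: (u ++ [c, a])

def SylvHStep (w w' : List ℕ) : Prop :=
  ∃ (p s u v : List ℕ), SylvHAdj u v ∧ w = p ++ u ++ s ∧ w' = p ++ v ++ s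

def SylvHEquiv : List ℕ → List ℕ → Prop := Relation.EqvGen SylvHStep

/-- The standardized word of `u`: position `i` receives the rank of the letter `u i`
(ties broken from left to right), ranks starting at `1`. -/
def std (u : List ℕ) : List ℕ :=
  (List.range u.length).map fun i =>
    ((List.range u.length).filter fun j =>
      decide (u.getD j 0 < u.getD i 0 ∨ (u.getD j 0 = u.getD i 0 ∧ j < i))).length + 1

/-- The maximal letter of a word. -/
def wordMax (u : List ℕ) : ℕ := u.foldr max 0

/-- The Schützenberger transformation: reverse and complement each letter w.r.t. max + 1. -/
def schutz (u : List ℕ) : List ℕ := u.reverse.map fun x => wordMax u + 1 - x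

/-- Labeled binary trees. -/
inductive BT where
  | leaf : BT
  | node : BT → ℕ → BT → BT
deriving DecidableEq

/-- Leaf insertion into a left binary search tree. -/
def leafInsL : BT → ℕ → BT
  | .leaf, a => .node .leaf a .leaf
  | .node l b r, a => if a < b then .node (leafInsL l a) b r else .node l b (leafInsL r a)

/-- Leaf insertion into a right binary search tree. -/
def leafInsR : BT → ℕ → BT
  | .leaf, a => .node .leaf a .leaf
  | .node l b r, a => if a ≤ b then .node (leafInsR l a) b r else .node l b (leafInsR r a)

/-- The lower restricted tree `T_{≤ a}` of a right binary search tree. -/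
def splitLE : BT → ℕ → BT
  | .leaf, _ => .leaf
  | .node l b r, a => if b ≤ a then .node l b (splitLE r a) else splitLE l a

/-- The higher restricted tree `T_{> a}` of a right binary search tree. -/
def splitGT : BT → ℕ → BT
  | .leaf, _ => .leaf
  | .node l b r, a => if b ≤ a then splitGT r a else .node (splitGT l a) b r

/-- Root insertion into a right binary search tree. -/
def rootIns (t : BT) (a : ℕ) : BT := .node (splitLE t a) a (splitGT t a)

/-- The left tree of the P-symbol: leaf insertions from left to right. -/
def insL (u : List ℕ) : BT := u.foldl leafInsL .leaf

/-- The right tree of the P-symbol: root insertions from left to right. -/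
def insR (u : List ℕ) : BT := u.foldl rootIns .leaf

/-- The P-symbol of a word. -/
def Psymb (u : List ℕ) : BT × BT := (insL u, insR u)

/-- Unlabeled binary trees. -/
inductive UBT where
  | leaf : UBT
  | node : UBT → UBT → UBT
deriving DecidableEq

/-- The shape of a labeled binary tree. -/
def shape : BT → UBT
  | .leaf => .leaf
  | .node l _ r => .node (shape l) (shape r)

/-- The shape of the P-symbol of a word. -/
def Pshape (u : List ℕ) : UBT × UBT := (shape (insL u), shape (insR u))

/-- Number of internal nodes. -/
def sizeU : UBT → ℕ
  | .leaf => 0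
  | .node l r => sizeU l + sizeU r + 1

/-- Orientations of the leaves, from left to right: `true` means right-oriented
(the leaf is the right child of its parent); the parameter is the orientation
assigned if the tree is reduced to a leaf. -/
def loU : UBT → Bool → List Bool
  | .leaf, b => [b]
  | .node l r, _ => loU l false ++ loU r true

/-- Leaf orientations of a labeled binary tree. -/
def loB : BT → Bool → List Bool
  | .leaf, b => [b]
  | .node l _ r, _ => loB l false ++ loB r true

/-- The canopy: orientations of the leaves except the first and the last one. -/
def canU (t : UBT) : List Bool := ((loU t false).drop 1).dropLast

/-- A pair of twin binary trees: same number of nodes and complementary canopies. -/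
def IsTwin (J : UBT × UBT) : Prop :=
  sizeU J.1 = sizeU J.2 ∧ (canU J.1).length = (canU J.2).length ∧
    ∀ i < (canU J.1).length, (canU J.1).getD i false ≠ (canU J.2).getD i false

/-- `σ` is (the word of) a permutation of `{1, …, n}`. -/
def IsPerm (n : ℕ) (σ : List ℕ) : Prop := σ.Perm (List.range' 1 n)

/-- Covering-type step of the right permutohedron (weak) order: exchange of two
adjacent letters `a < b`. -/
def PermutoStep (σ ν : List ℕ) : Prop :=
  ∃ (p s : List ℕ) (a b : ℕ), a < b ∧ σ = p ++ a :: b :: s ∧ ν = p ++ b :: a :: s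

/-- The right permutohedron (weak) order. -/
def PermutoLe : List ℕ → List ℕ → Prop := Relation.ReflTransGen PermutoStep

/-- Baxter permutations: avoiding the generalized patterns 2-41-3 and 3-14-2. -/
def IsBaxterPerm (σ : List ℕ) : Prop :=
  ∀ i j k, i < j → j + 1 < k → k < σ.length →
    ¬(σ.getD (j+1) 0 < σ.getD i 0 ∧ σ.getD i 0 < σ.getD k 0 ∧ σ.getD k 0 < σ.getD j 0) ∧
    ¬(σ.getD j 0 < σ.getD k 0 ∧ σ.getD k 0 < σ.getD i 0 ∧ σ.getD i 0 < σ.getD (j+1) 0)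

/-- Reverse-complement with respect to M+1. -/
def compRev (M : ℕ) (u : List ℕ) : List ℕ := (u.map fun x => M + 1 - x).reverse

lemma baxterAdj_perm {x y : List ℕ} (h : BaxterAdj x y) : x.Perm y := by
  rcases h with ⟨a, b, c, d, u, v, _, _, _, hx, hy⟩ | ⟨a, b, c, d, u, v, _, _, _, hx, hy⟩ <;>
    subst hx hy
  · exact (List.Perm.append_left u (List.Perm.swap d a _)).cons c
  · exact (List.Perm.append_left u (List.Perm.swap a d _)).cons b

lemma baxterStep_perm {x y : List ℕ} (h : BaxterStep x y) : x.Perm y := by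
  obtain ⟨p, s, u, v, hadj, hx, hy⟩ := h
  subst hx hy
  exact ((baxterAdj_perm hadj).append_left p).append_right s

lemma baxterEquiv_perm {x y : List ℕ} (h : BaxterEquiv x y) : x.Perm y := by
  induction h with
  | rel _ _ h => exact baxterStep_perm h
  | refl _ => exact List.Perm.refl _
  | symm _ _ _ ih => exact ih.symm
  | trans _ _ _ _ _ ih1 ih2 => exact ih1.trans ih2

lemma compRev_cons (M a : ℕ) (u : List ℕ) :
    compRev M (a :: u) = compRev M u ++ [M + 1 - a] := by
  simp [compRev]

lemma compRev_append (M : ℕ) (u v : List ℕ) :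
    compRev M (u ++ v) = compRev M v ++ compRev M u := by
  simp [compRev]

lemma baxterAdj_compRev {M : ℕ} {x y : List ℕ} (h : BaxterAdj x y)
    (hb : ∀ l ∈ x, l ≤ M) : BaxterAdj (compRev M x) (compRev M y) := by
  rcases h with ⟨a, b, c, d, u, v, h1, h2, h3, hx, hy⟩ |
      ⟨a, b, c, d, u, v, h1, h2, h3, hx, hy⟩
  · have hbM : b ≤ M := hb b (by simp [hx])
    have hcM : c ≤ M := hb c (by simp [hx])
    have hdM : d ≤ M := hb d (by simp [hx])
    refine Or.inl ⟨M + 1 - d, M + 1 - c, M + 1 - b, M + 1 - a, compRev M v, compRev M u,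
      by omega, by omega, by omega, ?_, ?_⟩ <;>
      simp [hx, hy, compRev_cons, compRev_append] <;> simp [compRev]
  · have hbM : b ≤ M := hb b (by simp [hx])
    have hcM : c ≤ M := hb c (by simp [hx])
    have hdM : d ≤ M := hb d (by simp [hx])
    refine Or.inr ⟨M + 1 - d, M + 1 - c, M + 1 - b, M + 1 - a, compRev M v, compRev M u,
      by omega, by omega, by omega, ?_, ?_⟩ <;>
      simp [hx, hy, compRev_cons, compRev_append] <;> simp [compRev]

lemma baxterStep_compRev {M : ℕ} {x y : List ℕ} (h : BaxterStep x y)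
    (hb : ∀ l ∈ x, l ≤ M) : BaxterStep (compRev M x) (compRev M y) := by
  obtain ⟨p, s, u, v, hadj, hx, hy⟩ := h
  refine ⟨compRev M s, compRev M p, compRev M u, compRev M v,
    baxterAdj_compRev hadj (fun l hl => hb l (by simp [hx, hl])), ?_, ?_⟩ <;>
    simp [hx, hy, compRev_append, List.append_assoc]

lemma baxterEquiv_compRev (M : ℕ) {x y : List ℕ} (h : BaxterEquiv x y) :
    (∀ l ∈ x, l ≤ M) → BaxterEquiv (compRev M x) (compRev M y) := by
  induction h with
  | rel a b h => exact fun hb => Relation.EqvGen.rel _ _ (baxterStep_compRev h hb)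
  | refl a => exact fun _ => Relation.EqvGen.refl _
  | symm a b h ih =>
    intro hb
    exact Relation.EqvGen.symm _ _
      (ih fun l hl => hb l ((baxterEquiv_perm h).mem_iff.mp hl))
  | trans a b c h1 h2 ih1 ih2 =>
    intro hb
    exact Relation.EqvGen.trans _ _ _ (ih1 hb)
      (ih2 fun l hl => hb l ((baxterEquiv_perm h1).mem_iff.mpr hl))

lemma wordMax_le_iff {u : List ℕ} {M : ℕ} : wordMax u ≤ M ↔ ∀ l ∈ u, l ≤ M := by
  induction u with
  | nil => simp [wordMax]
  | cons a u ih =>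
    simp only [List.mem_cons, forall_eq_or_imp]
    rw [show wordMax (a :: u) = max a (wordMax u) from rfl, Nat.max_le, ih]

lemma schutz_eq_compRev (u : List ℕ) : schutz u = compRev (wordMax u) u := by
  simp [schutz, compRev]

/-- the Baxter equivalence is compatible with the Schützenberger
involution. -/
theorem baxter_compatible_with_schutzenberger (u v : List ℕ) :
    BaxterEquiv u v → BaxterEquiv (schutz u) (schutz v) := by
  intro h
  have hp := baxterEquiv_perm h
  have hM : wordMax u = wordMax v := by
    have h1 : wordMax u ≤ wordMax v :=
      wordMax_le_iff.mpr fun l hl => wordMax_le_iff.mp le_rfl l (hp.mem_iff.mp hl)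
    have h2 : wordMax v ≤ wordMax u :=
      wordMax_le_iff.mpr fun l hl => wordMax_le_iff.mp le_rfl l (hp.mem_iff.mpr hl)
    omega
  rw [schutz_eq_compRev, schutz_eq_compRev, hM]
  exact baxterEquiv_compRev (wordMax v) h fun l hl =>
    wordMax_le_iff.mp le_rfl l (hp.mem_iff.mp hl)
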